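/- arXiv:1607.05848 — 2 statements merged into one kernel-verified Lean document; each statement's English description precedes it below -/
import Mathlib

section
/- Let G be a topological group and X a nonempty topological space equipped with a continuous G-action, and let G carry the G-action on itself by left translation. Assume there exists a continuous G-equivariant map X → G, and assume that X admits a G-equivariant Moore approximation of degree k for some integer k > 0, i.e., there is a topological space X' with a continuous G-action and a continuous G-equivariant map f : X' → X such that the induced map H_r(X';ℚ) → H_r(X;ℚ) on singular homology is an isomorphism for all r < k and H_r(X';ℚ) = 0 for all r ≥ k. Then H_m(G;ℚ) = 0 for all m ≥ k; that is, the rational homological dimension of G is at most k − 1. -/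
open CategoryTheory AlgebraicTopology Simplicial

noncomputable section

/-- The singular chain complex functor with rational coefficients. -/
def singularChainFunctor : TopCat.{0} ⥤ ChainComplex (ModuleCat.{0} ℚ) ℕ :=
  TopCat.toSSet ⋙ ((SimplicialObject.whiskering _ _).obj (ModuleCat.free ℚ)) ⋙
    alternatingFaceMapComplex _

/-- Singular homology with rational coefficients, as a functor. -/
def SH (n : ℕ) : TopCat.{0} ⥤ ModuleCat.{0} ℚ :=
  singularChainFunctor ⋙ HomologicalComplex.homologyFunctor _ _ n

/-- The `n`-th singular homology of a topological space, with `ℚ`-coefficients. -/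
def Hq (n : ℕ) (X : Type) [TopologicalSpace X] : ModuleCat.{0} ℚ :=
  (SH n).obj (TopCat.of X)

/-- The map induced on rational singular homology by a continuous map. -/
def Hmap {X Y : Type} [TopologicalSpace X] [TopologicalSpace Y]
    (f : C(X, Y)) (n : ℕ) : Hq n X →ₗ[ℚ] Hq n Y :=
  ((SH n).map (X := TopCat.of X) (Y := TopCat.of Y) (TopCat.ofHom f)).hom

/-- Homology of a topological retract is a retract on each homology module, hence
subsingleton homology passes from the big space to the retract. -/
theorem retract_subsingleton {A B : Type} [TopologicalSpace A] [TopologicalSpace B]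
    (r : C(A, B)) (s : C(B, A)) (hrs : ∀ b, r (s b) = b) (n : ℕ)
    (h : Subsingleton (Hq n A)) : Subsingleton (Hq n B) := by
  constructor
  intro a b
  have h1 : (TopCat.ofHom s) ≫ (TopCat.ofHom r)
      = 𝟙 (TopCat.of B) := by
    ext x; exact hrs x
  have h2 : ∀ c : Hq n B, (Hmap r n) ((Hmap s n) c) = c := by
    intro c
    have := congrArg (fun (g : TopCat.of B ⟶ TopCat.of B) => ((SH n).map g).hom c) h1
    simp only [Functor.map_comp, Functor.map_id] at this
    refine this.trans ?_
    rw [(SH n).map_id]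
    rfl
  calc a = (Hmap r n) ((Hmap s n) a) := (h2 a).symm
    _ = (Hmap r n) ((Hmap s n) b) := by rw [h.allEq ((Hmap s n) a) ((Hmap s n) b)]
    _ = b := h2 b

/-- The topological simplex is nonempty. -/
theorem toTopObj_nonempty (x : SimplexCategory) : Nonempty (SimplexCategory.toTop₀.obj x) := by
  infer_instance

/-- The augmentation on the free module over a type. -/
def eps (A : Type) : (ModuleCat.free ℚ).obj A ⟶ ModuleCat.of ℚ ℚ :=
  ModuleCat.freeDesc (TypeCat.ofHom fun _ => (1:ℚ))

theorem eps_single {A : Type} (a : A) (b : ℚ) :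
    eps A (Finsupp.single a b) = b := by
  show ((Finsupp.lift ℚ ℚ A) fun _ => (1:ℚ)) (Finsupp.single a b) = b
  rw [Finsupp.lift_apply]
  rw [Finsupp.sum_single_index] <;> simp

theorem free_map_eps {A B : Type} (g : A → B) :
    (ModuleCat.free ℚ).map (TypeCat.ofHom g) ≫ eps B = eps A := by
  apply ModuleCat.hom_ext
  apply Finsupp.lhom_ext
  intro a b
  show eps B (Finsupp.mapDomain g (Finsupp.single a b)) = eps A (Finsupp.single a b)
  rw [Finsupp.mapDomain_single, eps_single, eps_single]

/-- The zeroth rational singular homology of a nonempty space is nontrivial. -/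
theorem h0_nontrivial (X : Type) [TopologicalSpace X] [Nonempty X] :
    ¬ Subsingleton (Hq 0 X) := by
  intro hss
  set S := TopCat.toSSet.obj (TopCat.of X) with hS
  set Y := ((SimplicialObject.whiskering _ _).obj (ModuleCat.free ℚ)).obj S with hY
  set K := (alternatingFaceMapComplex _).obj Y with hK
  have hε : K.d 1 0 ≫ eps (S _⦋0⦌) = 0 := by
    rw [show K.d 1 0 = AlternatingFaceMapComplex.objD Y 0 from
      AlternatingFaceMapComplex.obj_d_eq Y 0]
    rw [AlternatingFaceMapComplex.objD]
    erw [Preadditive.sum_comp]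
    have : ∀ i : Fin 2, ((-1 : ℤ)^(i:ℕ) • Y.δ i) ≫ eps (S _⦋0⦌)
        = (-1 : ℤ)^(i:ℕ) • eps (S _⦋1⦌) := by
      intro i
      erw [Preadditive.zsmul_comp]
      congr 1
      exact free_map_eps (S.map (SimplexCategory.δ i).op)
    rw [Finset.sum_congr rfl (fun i _ => this i)]
    erw [Fin.sum_univ_two]
    simp
    exact add_neg_cancel _
  have hprev : (ComplexShape.down ℕ).prev 0 = 1 := by simp
  set εbar : K.homology 0 ⟶ ModuleCat.of ℚ ℚ :=
    K.homologyι 0 ≫ K.descOpcycles (eps (S _⦋0⦌)) 1 hprev hε with hεbar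
  set σ : S _⦋0⦌ := (TopCat.toSSetObjEquiv _ _).symm ⟨fun _ => Classical.arbitrary X, continuous_const⟩ with hσ
  have hnext : (ComplexShape.down ℕ).next 0 = 0 := ChainComplex.next_nat_zero
  set sing : ModuleCat.of ℚ ℚ ⟶ K.X 0 :=
    ModuleCat.ofHom (show ℚ →ₗ[ℚ] (S _⦋0⦌ →₀ ℚ) from Finsupp.lsingle σ) with hsing
  have hd00 : sing ≫ K.d 0 0 = 0 := by
    rw [K.shape 0 0 (by simp)]
    simp
  set cyc : ModuleCat.of ℚ ℚ ⟶ K.cycles 0 := K.liftCycles sing 0 hnext hd00 with hcyc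
  set θ : ModuleCat.of ℚ ℚ ⟶ K.homology 0 := cyc ≫ K.homologyπ 0 with hθ
  have key : θ ≫ εbar = sing ≫ eps (S _⦋0⦌) := by
    rw [hθ, hεbar]
    rw [Category.assoc, ← Category.assoc (K.homologyπ 0), HomologicalComplex.homology_π_ι]
    simp [hcyc]
    erw [HomologicalComplex.p_descOpcycles]
  have h1 : εbar (θ (show (ModuleCat.of ℚ ℚ : Type) from (1:ℚ))) = (1:ℚ) := by
    have hc : εbar (θ (show (ModuleCat.of ℚ ℚ : Type) from (1:ℚ)))
        = eps (S _⦋0⦌) ((Finsupp.lsingle σ : ℚ →ₗ[ℚ] (S _⦋0⦌ →₀ ℚ)) (1:ℚ)) :=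
      congrArg (fun (m : ModuleCat.of ℚ ℚ ⟶ ModuleCat.of ℚ ℚ) =>
        m (show (ModuleCat.of ℚ ℚ : Type) from (1:ℚ))) key
    rw [hc, Finsupp.lsingle_apply, eps_single]
  have h0 : θ (show (ModuleCat.of ℚ ℚ : Type) from (1:ℚ)) = 0 := hss.elim _ _
  rw [h0, map_zero] at h1
  exact zero_ne_one (show (0:ℚ) = (1:ℚ) from h1)

/-- An empty space has subsingleton homology in every degree. -/
theorem empty_subsingleton (X : Type) [TopologicalSpace X] (hX : IsEmpty X) (n : ℕ) :
    Subsingleton (Hq n X) := by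
  set K := singularChainFunctor.obj (TopCat.of X) with hK
  have hempty : ∀ m : ℕ, IsEmpty ((TopCat.toSSet.obj (TopCat.of X)) _⦋m⦌) := by
    intro m
    constructor
    intro τ
    exact hX.false ((TopCat.toSSetObjEquiv _ _ τ) (Classical.arbitrary _))
  have hXn : ∀ m : ℕ, Subsingleton (K.X m) := by
    intro m
    have := hempty m
    constructor
    intro a b
    apply Finsupp.ext (α := (TopCat.toSSet.obj (TopCat.of X)) _⦋m⦌) (M := ℚ)
    intro s
    exact (hempty m).elim s
  have h1 : Subsingleton (K.cycles n) := by
    have := (ModuleCat.mono_iff_injective (K.iCycles n)).mp inferInstance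
    have hx := hXn n
    exact this.subsingleton
  have h2 := (ModuleCat.epi_iff_surjective (K.homologyπ n)).mp inferInstance
  exact h2.subsingleton

/-- **Moore approximations bound the homological dimension of the group.**
If a nonempty `G`-space `X` admits a continuous `G`-equivariant map to `G` (with the left
translation action) and a `G`-equivariant Moore approximation `f : X' → X` of degree `k > 0`,
then `H_m(G;ℚ) = 0` for all `m ≥ k`, i.e. the rational homological dimension of `G`
is at most `k - 1`. -/
theorem moore_approximation_bounds_homological_dimension
    {G X X' : Type} [Group G] [TopologicalSpace G] [IsTopologicalGroup G]
    [TopologicalSpace X] [Nonempty X] [MulAction G X] [ContinuousSMul G X]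
    [TopologicalSpace X'] [MulAction G X'] [ContinuousSMul G X']
    (φ : X → G) (hφc : Continuous φ)
    (hφe : ∀ (g : G) (x : X), φ (g • x) = g * φ x)
    (k : ℕ) (hk : 0 < k)
    (f : X' → X) (hfc : Continuous f)
    (hfe : ∀ (g : G) (x' : X'), f (g • x') = g • f x')
    (hiso : ∀ r : ℕ, r < k → Function.Bijective (Hmap ⟨f, hfc⟩ r))
    (hvan : ∀ r : ℕ, k ≤ r → Subsingleton (Hq r X')) :
    ∀ m : ℕ, k ≤ m → Subsingleton (Hq m G) := by
  intro m hm
  by_cases hX' : Nonempty X'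
  · -- `G` is a retract of `X'` via `φ ∘ f` and `g ↦ g • c'`.
    obtain ⟨x₀'⟩ := hX'
    set c' : X' := (φ (f x₀'))⁻¹ • x₀' with hc'
    refine retract_subsingleton (A := X') (B := G)
      ⟨fun x' => φ (f x'), hφc.comp hfc⟩
      ⟨fun g => g • c', (continuous_id.smul continuous_const)⟩ ?_ m (hvan m hm)
    intro g
    show φ (f (g • c')) = g
    rw [hfe, hφe, hc', hfe, hφe]
    simp
  · -- `X'` empty contradicts `H₀(X';ℚ) ≅ H₀(X;ℚ) ≠ 0`.
    exfalso
    have hsub : Subsingleton (Hq 0 X') := empty_subsingleton X' (not_nonempty_iff.mp hX') 0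
    have hsurj := (hiso 0 hk).2
    refine h0_nontrivial X ?_
    constructor
    intro a b
    obtain ⟨a', ha⟩ := hsurj a
    obtain ⟨b', hb⟩ := hsurj b
    rw [← ha, ← hb, hsub.elim a' b']
end
end

section
/- Let T and Σ be topological spaces, π : T → Σ and ρ : T → [0,∞) continuous maps, and ε : Σ → (0,∞) a continuous function. Set T_ε = { x ∈ T : ρ(x) < ε(π(x)) } and Σ×[0,ε) = { (s,t) ∈ Σ × [0,∞) : t < ε(s) }. Assume that the map (π,ρ) : T_ε → Σ×[0,ε) is proper and surjective. Then the set E = { x ∈ T_ε : ρ(x) = ε(π(x))/2 } is closed in T_ε, and the restriction π|_E : E → Σ is proper and surjective. -/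
open Filter Topology


/-- **Point-set core of the construction of the link bundle** of the singular stratum of a
two-strata Thom–Mather stratified pseudomanifold.  Let `π : T → Σ`, `ρ : T → [0,∞)` be
continuous, `ε : Σ → (0,∞)` continuous, and set `T_ε = {x | ρ x < ε (π x)}`.  If
`(π,ρ) : T_ε → Σ×[0,ε)` is proper and surjective, then `E = {x ∈ T_ε | ρ x = ε (π x)/2}`
is closed in `T_ε`, and `π|_E : E → Σ` is proper and surjective. -/
theorem link_sphere_closed_proper_surjective
    {T S : Type} [TopologicalSpace T] [TopologicalSpace S]
    (π : T → S) (ρ : T → ℝ) (ε : S → ℝ)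
    (hπ : Continuous π) (hρ : Continuous ρ) (hε : Continuous ε)
    (hρ0 : ∀ x : T, 0 ≤ ρ x) (hε0 : ∀ s : S, 0 < ε s)
    (hproper : IsProperMap (fun x : {x : T // ρ x < ε (π x)} =>
      (⟨(π (x : T), ρ (x : T)), hρ0 (x : T), x.2⟩ :
        {p : S × ℝ // 0 ≤ p.2 ∧ p.2 < ε p.1})))
    (hsurj : Function.Surjective (fun x : {x : T // ρ x < ε (π x)} =>
      (⟨(π (x : T), ρ (x : T)), hρ0 (x : T), x.2⟩ :
        {p : S × ℝ // 0 ≤ p.2 ∧ p.2 < ε p.1}))) :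
    IsClosed {x : {x : T // ρ x < ε (π x)} | ρ (x : T) = ε (π (x : T)) / 2} ∧
    IsProperMap (fun x : {x : T // ρ x = ε (π x) / 2 ∧ ρ x < ε (π x)} => π (x : T)) ∧
    Function.Surjective
      (fun x : {x : T // ρ x = ε (π x) / 2 ∧ ρ x < ε (π x)} => π (x : T)) := by
  have hρ' : Continuous fun x : {x : T // ρ x < ε (π x)} => ρ (x : T) :=
    hρ.comp continuous_subtype_val
  have hεπ' : Continuous fun x : {x : T // ρ x < ε (π x)} => ε (π (x : T)) / 2 :=
    ((hε.comp hπ).comp continuous_subtype_val).div_const 2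
  refine ⟨isClosed_eq hρ' hεπ', ?_, ?_⟩
  · -- properness of π restricted to E
    rw [isProperMap_iff_ultrafilter]
    refine ⟨hπ.comp continuous_subtype_val, fun 𝒰 s hs => ?_⟩
    -- inclusion of E into T_ε
    let inc : {x : T // ρ x = ε (π x) / 2 ∧ ρ x < ε (π x)} → {x : T // ρ x < ε (π x)} :=
      fun x => ⟨(x : T), x.2.2⟩
    -- the candidate limit in Σ×[0,ε)
    have hεs : (0 : ℝ) ≤ ε s / 2 ∧ ε s / 2 < ε s := by
      constructor
      · linarith [hε0 s]
      · linarith [hε0 s]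
    have htend : Tendsto
        (fun x : {x : T // ρ x < ε (π x)} =>
          (⟨(π (x : T), ρ (x : T)), hρ0 (x : T), x.2⟩ :
            {p : S × ℝ // 0 ≤ p.2 ∧ p.2 < ε p.1}))
        (Ultrafilter.map inc 𝒰) (𝓝 ⟨(s, ε s / 2), hεs⟩) := by
      rw [Ultrafilter.coe_map, tendsto_map'_iff]
      have : (fun x : {x : T // ρ x = ε (π x) / 2 ∧ ρ x < ε (π x)} => ((π (x : T), ρ (x : T)) : S × ℝ)) =
          fun x : {x : T // ρ x = ε (π x) / 2 ∧ ρ x < ε (π x)} => (π (x : T), ε (π (x : T)) / 2) := by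
        funext x
        exact Prod.ext rfl x.2.1
      have hbase : Tendsto (fun x : {x : T // ρ x = ε (π x) / 2 ∧ ρ x < ε (π x)} =>
          ((π (x : T), ρ (x : T)) : S × ℝ)) 𝒰 (𝓝 (s, ε s / 2)) := by
        rw [this]
        exact Tendsto.prodMk_nhds hs (((hε.tendsto s).comp hs).div_const 2)
      rw [tendsto_subtype_rng]
      exact hbase
    obtain ⟨x₀, hx₀, hle⟩ := hproper.ultrafilter_le_nhds_of_tendsto htend
    have hx₀' : π (x₀ : T) = s ∧ ρ (x₀ : T) = ε s / 2 := by
      have := congrArg Subtype.val hx₀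
      exact ⟨congrArg Prod.fst this, congrArg Prod.snd this⟩
    have hmem : ρ (x₀ : T) = ε (π (x₀ : T)) / 2 := by rw [hx₀'.1, hx₀'.2]
    refine ⟨⟨(x₀ : T), hmem, x₀.2⟩, hx₀'.1, ?_⟩
    -- convergence in E from convergence in T_ε
    refine le_of_le_of_eq ?_ (Topology.IsInducing.subtypeVal.nhds_eq_comap _).symm
    rw [← Filter.map_le_iff_le_comap]
    have : Filter.map (Subtype.val : {x : T // ρ x = ε (π x) / 2 ∧ ρ x < ε (π x)} → T) 𝒰 =
        Filter.map (Subtype.val : {x : T // ρ x < ε (π x)} → T) (Filter.map inc 𝒰) := by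
      rw [Filter.map_map]; rfl
    refine le_trans (le_of_eq this) (le_trans (Filter.map_mono hle) ?_)
    exact continuous_subtype_val.continuousAt
  · -- surjectivity
    intro s
    have hεs : (0 : ℝ) ≤ ε s / 2 ∧ ε s / 2 < ε s := ⟨by linarith [hε0 s], by linarith [hε0 s]⟩
    obtain ⟨x, hx⟩ := hsurj ⟨(s, ε s / 2), hεs⟩
    have hx' := congrArg Subtype.val hx
    have h1 : π (x : T) = s := congrArg Prod.fst hx'
    have h2 : ρ (x : T) = ε s / 2 := congrArg Prod.snd hx'
    exact ⟨⟨(x : T), by rw [h1, h2], x.2⟩, h1⟩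
end
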